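/- arXiv:2105.01947 — 9 statements merged into one kernel-verified Lean document; each statement's English description precedes it below -/
import Mathlib

section
/- Let φ : A → B be a flat epimorphism of commutative rings and let q be a prime ideal of B with p = φ⁻¹(q). Then the induced homomorphism of residue fields κ(p) → κ(q) is an isomorphism (bijective). -/
open TensorProduct

/-- Epimorphisms satisfy `s ⊗ 1 = 1 ⊗ s`. -/
theorem epi_tmul_aux {A B : Type} [CommRing A] [CommRing B] [Algebra A B]
    (hepi : ∀ (C : Type) [CommRing C] (g h : B →+* C),
      g.comp (algebraMap A B) = h.comp (algebraMap A B) → g = h)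
    (s : B) : s ⊗ₜ[A] (1 : B) = (1 : B) ⊗ₜ[A] s := by
  have := hepi (B ⊗[A] B) (Algebra.TensorProduct.includeLeftRingHom (R := A))
    (Algebra.TensorProduct.includeRight.toRingHom) ?_
  · exact RingHom.congr_fun this s
  · ext r
    show (algebraMap A B r) ⊗ₜ[A] (1 : B) = (1 : B) ⊗ₜ[A] (algebraMap A B r)
    rw [Algebra.algebraMap_eq_smul_one, smul_tmul]

/-- Flatness passes from `R` to a localization `Rp` for modules over `Rp`. -/
theorem flat_of_flat_of_isLocalization {R Rp : Type} [CommRing R] [CommRing Rp] [Algebra R Rp]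
    (S : Submonoid R) [IsLocalization S Rp]
    {M : Type} [AddCommGroup M] [Module R M] [Module Rp M] [IsScalarTower R Rp M]
    [Module.Flat R M] : Module.Flat Rp M := by
  rw [Module.Flat.iff_rTensor_injective']
  intro I
  haveI := IsLocalization.tensorProduct_compatibleSMul S Rp I M
  haveI := IsLocalization.tensorProduct_compatibleSMul S Rp Rp M
  let e1 : I ⊗[Rp] M ≃ₗ[Rp] I ⊗[R] M := TensorProduct.equivOfCompatibleSMul R Rp Rp I M
  let e2 : Rp ⊗[Rp] M ≃ₗ[Rp] Rp ⊗[R] M := TensorProduct.equivOfCompatibleSMul R Rp Rp Rp M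
  have key : ∀ x : I ⊗[Rp] M, e2 (LinearMap.rTensor M I.subtype x)
      = LinearMap.rTensor M ((I.subtype).restrictScalars R) (e1 x) := by
    intro x
    induction x using TensorProduct.induction_on with
    | zero => simp
    | tmul a b => rfl
    | add x y hx hy => simp only [map_add, hx, hy]
  have hinj : Function.Injective (LinearMap.rTensor M ((I.subtype).restrictScalars R)) :=
    Module.Flat.rTensor_preserves_injective_linearMap _ (fun a b h => Subtype.ext h)
  intro x y hxy
  apply e1.injective
  apply hinj
  rw [← key, ← key, hxy]

/-- Over a flat local algebra, `m ⊗ 1 = 0` implies `m = 0`. -/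
theorem eq_zero_of_tmul_one_eq_zero {R S : Type} [CommRing R] [CommRing S] [Algebra R S]
    [IsLocalRing R] [IsLocalRing S] [IsLocalHom (algebraMap R S)] [Module.Flat R S]
    {M : Type} [AddCommGroup M] [Module R M] (m : M)
    (h : m ⊗ₜ[R] (1 : S) = 0) : m = 0 := by
  by_contra hm
  set I := Ideal.torsionOf R M m with hIdef
  have hIne : I ≠ ⊤ := fun hI => hm (by rwa [hIdef, Ideal.torsionOf_eq_top_iff] at hI)
  -- the element ⟨m, _⟩ ⊗ 1 of (R ∙ m) ⊗ S is zero
  have hinj : Function.Injective (LinearMap.rTensor S (R ∙ m).subtype) :=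
    Module.Flat.rTensor_preserves_injective_linearMap _ (Submodule.injective_subtype _)
  have hx : (⟨m, Submodule.mem_span_singleton_self m⟩ : R ∙ m) ⊗ₜ[R] (1 : S) = 0 := by
    apply hinj
    rw [LinearMap.rTensor_tmul, map_zero]
    exact h
  -- transfer along the equivalence R ⧸ I ≃ R ∙ m
  let e := Ideal.quotTorsionOfEquivSpanSingleton R M m
  have hinj2 : Function.Injective (LinearMap.rTensor S e.toLinearMap) :=
    Module.Flat.rTensor_preserves_injective_linearMap _ e.injective
  have hy : (Ideal.Quotient.mk I (1 : R)) ⊗ₜ[R] (1 : S) = (0 : (R ⧸ I) ⊗[R] S) := by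
    apply hinj2
    rw [LinearMap.rTensor_tmul, map_zero]
    have he : e.toLinearMap (Ideal.Quotient.mk I (1 : R))
        = (⟨m, Submodule.mem_span_singleton_self m⟩ : R ∙ m) := by
      show e (Submodule.Quotient.mk (1 : R)) = _
      rw [Ideal.quotTorsionOfEquivSpanSingleton_apply_mk, one_smul]
    rw [he, hx]
  -- hence 1 ∈ I • ⊤ in S
  have := congrArg (TensorProduct.quotTensorEquivQuotSMul S I) hy
  rw [TensorProduct.quotTensorEquivQuotSMul_mk_tmul, map_zero, one_smul] at this
  have h1S : (1 : S) ∈ (I • ⊤ : Submodule R S) :=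
    (Submodule.Quotient.mk_eq_zero _).mp this
  have hle : (I • ⊤ : Submodule R S) ≤ (IsLocalRing.maximalIdeal S).restrictScalars R := by
    rw [Submodule.smul_le]
    intro r hr s _
    have hru : ¬ IsUnit (algebraMap R S r) := by
      intro hu
      exact IsLocalRing.le_maximalIdeal hIne hr (IsLocalHom.map_nonunit r hu)
    have : algebraMap R S r * s ∈ IsLocalRing.maximalIdeal S :=
      Ideal.mul_mem_right s _ hru
    simpa [Algebra.smul_def] using this
  exact (IsLocalRing.mem_maximalIdeal _).mp (hle h1S) isUnit_one

/-- A flat local epimorphism of local rings is surjective. -/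
theorem surjective_of_flat_epi_local {R S : Type} [CommRing R] [CommRing S] [Algebra R S]
    [IsLocalRing R] [IsLocalRing S] [IsLocalHom (algebraMap R S)] [Module.Flat R S]
    (hepi : ∀ (C : Type) [CommRing C] (g h : S →+* C),
      g.comp (algebraMap R S) = h.comp (algebraMap R S) → g = h) :
    Function.Surjective (algebraMap R S) := by
  intro s
  set N := LinearMap.range (Algebra.linearMap R S) with hN
  have h1 : N.mkQ (1 : S) = 0 := by
    rw [Submodule.mkQ_apply, Submodule.Quotient.mk_eq_zero]
    exact ⟨1, by simp [Algebra.linearMap_apply]⟩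
  have h0 : (N.mkQ s) ⊗ₜ[R] (1 : S) = 0 := by
    calc (N.mkQ s) ⊗ₜ[R] (1 : S) = LinearMap.rTensor S N.mkQ (s ⊗ₜ[R] (1 : S)) := by
          rw [LinearMap.rTensor_tmul]
    _ = LinearMap.rTensor S N.mkQ ((1 : S) ⊗ₜ[R] s) := by rw [epi_tmul_aux hepi s]
    _ = (N.mkQ (1 : S)) ⊗ₜ[R] s := by rw [LinearMap.rTensor_tmul]
    _ = 0 := by rw [h1, TensorProduct.zero_tmul]
  have := eq_zero_of_tmul_one_eq_zero (N.mkQ s) h0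
  rw [Submodule.mkQ_apply, Submodule.Quotient.mk_eq_zero] at this
  obtain ⟨r, hr⟩ := this
  exact ⟨r, hr⟩

/-- If `φ : A → B` is a flat epimorphism of commutative rings and `q` is a prime ideal of
`B` with `p = φ⁻¹(q)`, then the induced homomorphism of residue fields `κ(p) → κ(q)` is
bijective. -/
theorem stmt2 {A B : Type} [CommRing A] [CommRing B] (φ : A →+* B)
    (hflat : φ.Flat)
    (hepi : ∀ (C : Type) [CommRing C] (g h : B →+* C), g.comp φ = h.comp φ → g = h)
    (q : Ideal B) [q.IsPrime] :
    Function.Bijective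
      (IsLocalRing.ResidueField.map (Localization.localRingHom (q.comap φ) q φ rfl)) := by
  set p : Ideal A := q.comap φ with hp
  haveI : p.IsPrime := Ideal.IsPrime.comap φ
  set R := Localization.AtPrime p
  set S := Localization.AtPrime q
  set f : R →+* S := Localization.localRingHom p q φ rfl with hf
  letI : Algebra A B := φ.toAlgebra
  haveI hflatAB : Module.Flat A B := hflat
  -- S as an A-algebra
  haveI hflatBS : Module.Flat B S := IsLocalization.flat S q.primeCompl
  haveI hflatAS : Module.Flat A S := Module.Flat.trans A B S
  -- S as an R-algebra via f
  letI : Algebra R S := f.toAlgebra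
  haveI : IsLocalHom f := Localization.isLocalHom_localRingHom p q φ rfl
  haveI : IsLocalHom (algebraMap R S) := ‹IsLocalHom f›
  have key : ∀ a : A, algebraMap B S (φ a) = f (algebraMap A R a) :=
    fun a => (Localization.localRingHom_to_map p q φ rfl a).symm
  haveI : IsScalarTower A R S := IsScalarTower.of_algebraMap_eq fun a => by
    rw [IsScalarTower.algebraMap_apply A B S]
    exact key a
  haveI : Module.Flat R S := flat_of_flat_of_isLocalization (R := A) p.primeCompl
  -- f is an epimorphism
  have hepiRS : ∀ (C : Type) [CommRing C] (g h : S →+* C),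
      g.comp (algebraMap R S) = h.comp (algebraMap R S) → g = h := by
    intro C _ g h hgh
    apply IsLocalization.ringHom_ext q.primeCompl
    apply hepi
    ext a
    show g (algebraMap B S (φ a)) = h (algebraMap B S (φ a))
    rw [key a]
    exact RingHom.congr_fun hgh (algebraMap A R a)
  have hsurj : Function.Surjective f := surjective_of_flat_epi_local hepiRS
  constructor
  · exact RingHom.injective _
  · intro y
    obtain ⟨s, rfl⟩ := IsLocalRing.residue_surjective y
    obtain ⟨r, rfl⟩ := hsurj s
    exact ⟨IsLocalRing.residue R r, IsLocalRing.ResidueField.map_residue f r⟩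
end

section
/- Let φ : A → B be a flat epimorphism of commutative rings, M an A-module, and q a prime ideal of B with p = φ⁻¹(q). Then the natural map M_p → (M ⊗_A B)_q, from the localization of M at p to the localization of the B-module M ⊗_A B at q, is bijective. -/
open scoped TensorProduct
open TensorProduct

/-- If `B` is a flat `A`-algebra and `b ⊗ m = 0` in `B ⊗[A] M`, then
`b` lies in `Ann(m) • B`. -/
lemma aux_flat_tmul_zero {A B M : Type*} [CommRing A] [CommRing B] [Algebra A B]
    [Module.Flat A B] [AddCommGroup M] [Module A M] {b : B} {m : M}
    (h : b ⊗ₜ[A] m = (0 : B ⊗[A] M)) :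
    b ∈ (LinearMap.ker (LinearMap.toSpanSingleton A M m) : Ideal A) •
      (⊤ : Submodule A B) := by
  set I : Ideal A := LinearMap.ker (LinearMap.toSpanSingleton A M m) with hI
  let j : (A ⧸ I) →ₗ[A] M := I.liftQ (LinearMap.toSpanSingleton A M m) le_rfl
  have hj : Function.Injective j := by
    have := Submodule.ker_liftQ_eq_bot (p := I) (LinearMap.toSpanSingleton A M m) le_rfl le_rfl
    exact LinearMap.ker_eq_bot.mp this
  have h0 : b ⊗ₜ[A] (Ideal.Quotient.mk I 1) = (0 : B ⊗[A] (A ⧸ I)) := by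
    have hinj := Module.Flat.lTensor_preserves_injective_linearMap (M := B) j hj
    apply hinj
    rw [map_zero, LinearMap.lTensor_tmul]
    have hj1 : j (Ideal.Quotient.mk I 1) = m := by
      show I.liftQ (LinearMap.toSpanSingleton A M m) le_rfl (Submodule.Quotient.mk 1) = m
      rw [Submodule.liftQ_apply, LinearMap.toSpanSingleton_apply, one_smul]
    rw [hj1, h]
  have h1 := congrArg (TensorProduct.tensorQuotEquivQuotSMul B I) h0
  rw [map_zero] at h1
  have h2 : (TensorProduct.tensorQuotEquivQuotSMul B I) (b ⊗ₜ[A] Ideal.Quotient.mk I 1)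
      = Submodule.Quotient.mk b := by
    show (TensorProduct.quotTensorEquivQuotSMul B I)
      ((TensorProduct.comm A B (A ⧸ I)) (b ⊗ₜ[A] Ideal.Quotient.mk I 1)) = _
    rw [TensorProduct.comm_tmul, TensorProduct.quotTensorEquivQuotSMul_mk_tmul, one_smul]
  rw [h2] at h1
  exact (Submodule.Quotient.mk_eq_zero _).mp h1

/-- A faithfully flat algebra whose structure map is an epimorphism (in the
`s ⊗ 1 = 1 ⊗ s` form) has bijective structure map. -/
lemma aux_bijective_of_faithfullyFlat_epi {R S : Type*} [CommRing R] [CommRing S] [Algebra R S]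
    [Module.FaithfullyFlat R S] (h : ∀ s : S, s ⊗ₜ[R] (1 : S) = 1 ⊗ₜ[R] s) :
    Function.Bijective (algebraMap R S) := by
  constructor
  · rw [injective_iff_map_eq_zero]
    intro d hd
    let f : R →ₗ[R] R := LinearMap.toSpanSingleton R R d
    have hf : LinearMap.lTensor S f = 0 := by
      apply TensorProduct.ext'
      intro s x
      rw [LinearMap.lTensor_tmul, LinearMap.zero_apply]
      show s ⊗ₜ[R] (f x) = 0
      have hfx : f x = x * d := by
        simp [f, LinearMap.toSpanSingleton_apply, smul_eq_mul]
      rw [hfx]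
      calc s ⊗ₜ[R] (x * d) = ((x * d) • s) ⊗ₜ[R] (1 : R) := by
            rw [smul_tmul, smul_eq_mul, mul_one]
        _ = 0 := by
            rw [Algebra.smul_def, map_mul, hd, mul_zero, zero_mul, TensorProduct.zero_tmul]
    have hf0 : f = 0 := (Module.FaithfullyFlat.zero_iff_lTensor_zero R S f).mpr hf
    have := LinearMap.congr_fun hf0 1
    simpa [f, LinearMap.toSpanSingleton_apply] using this
  · intro y
    set N := LinearMap.range (Algebra.linearMap R S) with hN
    have hπ : LinearMap.lTensor S N.mkQ = 0 := by
      apply TensorProduct.ext'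
      intro s t
      rw [LinearMap.lTensor_tmul, LinearMap.zero_apply]
      have h1 : (1 : S) ⊗ₜ[R] N.mkQ t = (0 : S ⊗[R] (S ⧸ N)) := by
        have h2 := congrArg (LinearMap.lTensor S N.mkQ) (h t)
        rw [LinearMap.lTensor_tmul, LinearMap.lTensor_tmul] at h2
        have h3 : N.mkQ 1 = 0 := by
          rw [Submodule.mkQ_apply, Submodule.Quotient.mk_eq_zero]
          exact ⟨1, by simp⟩
        rw [h3, TensorProduct.tmul_zero] at h2
        exact h2.symm
      calc s ⊗ₜ[R] N.mkQ t = s • ((1 : S) ⊗ₜ[R] N.mkQ t) := by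
            rw [smul_tmul', smul_eq_mul, mul_one]
        _ = 0 := by rw [h1, smul_zero]
    have hq : N.mkQ = 0 := (Module.FaithfullyFlat.zero_iff_lTensor_zero R S N.mkQ).mpr hπ
    have hy : y ∈ N := by
      have := LinearMap.congr_fun hq y
      rwa [Submodule.mkQ_apply, LinearMap.zero_apply, Submodule.Quotient.mk_eq_zero] at this
    obtain ⟨r, hr⟩ := hy
    exact ⟨r, hr⟩

/-- If `φ : A → B` is a flat epimorphism of commutative rings, `M` an `A`-module and `q` a
prime ideal of `B` with `p = φ⁻¹(q)`, then the natural map `M_p → (M ⊗_A B)_q` (from the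
localization of `M` at `p` to the localization of the `B`-module `M ⊗_A B = B ⊗[A] M` at
`q`) is bijective.  The natural map is characterized as the unique additive,
`A`-semilinear map sending the class of `m` to the class of `1 ⊗ m`. -/
theorem stmt3 {A B : Type} [CommRing A] [CommRing B] [Algebra A B]
    (hflat : Module.Flat A B)
    (hepi : ∀ (C : Type) [CommRing C] (g h : B →+* C),
      g.comp (algebraMap A B) = h.comp (algebraMap A B) → g = h)
    (M : Type) [AddCommGroup M] [Module A M]
    (q : Ideal B) [q.IsPrime] :
    ∃ g : LocalizedModule (q.comap (algebraMap A B)).primeCompl M →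
        LocalizedModule q.primeCompl (B ⊗[A] M),
      Function.Bijective g ∧
      (∀ x y, g (x + y) = g x + g y) ∧
      (∀ (a : A) x, g (a • x) = algebraMap A B a • g x) ∧
      (∀ m : M, g (LocalizedModule.mk m 1) = LocalizedModule.mk (1 ⊗ₜ m) 1) := by
  classical
  haveI := hflat
  haveI hp : (q.comap (algebraMap A B)).IsPrime := Ideal.IsPrime.comap _
  set p : Ideal A := q.comap (algebraMap A B) with hpdef
  have hq1 : ∀ s : A, s ∈ p.primeCompl → algebraMap A B s ∈ q.primeCompl :=
    fun s hs hmem => hs (Ideal.mem_comap.mpr hmem)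
  -- local rings
  set Ap := Localization.AtPrime p with hAp
  set Bq := Localization.AtPrime q with hBq
  let ψ : Ap →+* Bq := Localization.localRingHom p q (algebraMap A B) rfl
  letI : Algebra Ap Bq := ψ.toAlgebra
  haveI : IsScalarTower A Ap Bq := ⟨fun a x z => by
    show (a • x) • z = a • (x • z)
    rw [Algebra.smul_def a x, Algebra.smul_def, Algebra.smul_def, Algebra.smul_def, map_mul,
      RingHom.algebraMap_toAlgebra, Localization.localRingHom_to_map, mul_assoc]
    rfl⟩
  haveI : Module.Flat B Bq := IsLocalization.flat Bq q.primeCompl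
  haveI : Module.Flat A Bq := Module.Flat.trans A B Bq
  haveI := isLocalizedModule_id p.primeCompl Bq Ap
  haveI : Module.Flat Ap Bq :=
    Module.Flat.of_isLocalizedModule (Rp := Ap) p.primeCompl (LinearMap.id : Bq →ₗ[A] Bq)
  haveI : IsLocalHom ψ := Localization.isLocalHom_localRingHom p q (algebraMap A B) rfl
  haveI : Module.FaithfullyFlat Ap Bq := by
    rw [Module.FaithfullyFlat.iff_flat_and_proper_ideal]
    refine ⟨inferInstance, fun I hI hIT => ?_⟩
    have hle : I ≤ IsLocalRing.maximalIdeal Ap := IsLocalRing.le_maximalIdeal hI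
    have hsub : I • (⊤ : Submodule Ap Bq) ≤
        Submodule.restrictScalars Ap (Submodule.restrictScalars Bq
          (IsLocalRing.maximalIdeal Bq)) := by
      refine Submodule.smul_le.mpr fun i hi b _ => ?_
      show i • b ∈ IsLocalRing.maximalIdeal Bq
      rw [Algebra.smul_def]
      refine Ideal.mul_mem_right b _ ?_
      have hnon : ¬ IsUnit i := hle hi
      refine fun hu => hnon (‹IsLocalHom ψ›.map_nonunit i ?_)
      rwa [RingHom.algebraMap_toAlgebra] at hu
    have h1 : (1 : Bq) ∈ I • (⊤ : Submodule Ap Bq) := by rw [hIT]; trivial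
    have := hsub h1
    exact (IsLocalRing.maximalIdeal.isMaximal Bq).ne_top (Ideal.eq_top_of_isUnit_mem _ this isUnit_one)
  -- epi at the localized level
  have hψtm : ∀ x : Bq, x ⊗ₜ[Ap] (1 : Bq) = (1 : Bq) ⊗ₜ[Ap] x := by
    intro x
    have key : (Algebra.TensorProduct.includeLeftRingHom : Bq →+* Bq ⊗[Ap] Bq)
        = (Algebra.TensorProduct.includeRight : Bq →ₐ[Ap] Bq ⊗[Ap] Bq).toRingHom := by
      apply IsLocalization.ringHom_ext q.primeCompl
      apply hepi
      refine RingHom.ext fun a => ?_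
      show (algebraMap B Bq (algebraMap A B a)) ⊗ₜ[Ap] (1 : Bq)
        = (1 : Bq) ⊗ₜ[Ap] (algebraMap B Bq (algebraMap A B a))
      have hmap : algebraMap B Bq (algebraMap A B a) = algebraMap Ap Bq (algebraMap A Ap a) :=
        (Localization.localRingHom_to_map p q (algebraMap A B) rfl a).symm
      rw [hmap, Algebra.algebraMap_eq_smul_one, smul_tmul]
    simpa using RingHom.congr_fun key x
  have hψbij : Function.Bijective ψ :=
    aux_bijective_of_faithfullyFlat_epi (R := Ap) (S := Bq) hψtm
  -- concrete representation of elements of B in B_q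
  have hrep : ∀ (b : B) (t : q.primeCompl), ∃ (a : A) (s : p.primeCompl) (u : q.primeCompl),
      (u : B) * (algebraMap A B s * b) = (u : B) * (algebraMap A B a * t) := by
    intro b t
    obtain ⟨x, hx⟩ := hψbij.2 (IsLocalization.mk' Bq b t)
    obtain ⟨⟨a, s⟩, rfl⟩ := IsLocalization.mk'_surjective p.primeCompl x
    rw [Localization.localRingHom_mk'] at hx
    rw [IsLocalization.mk'_eq_iff_eq] at hx
    obtain ⟨u, hu⟩ := (IsLocalization.eq_iff_exists q.primeCompl Bq).mp hx
    exact ⟨a, s, u, by linear_combination -hu⟩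
  -- torsion statement
  have htor : ∀ (u : B) (m₀ : M), u ⊗ₜ[A] m₀ = (0 : B ⊗[A] M) → u ∈ q.primeCompl →
      ∃ s : p.primeCompl, (s : A) • m₀ = 0 := by
    intro u m₀ h0 hu
    have hmem := aux_flat_tmul_zero (A := A) (B := B) h0
    set I : Ideal A := LinearMap.ker (LinearMap.toSpanSingleton A M m₀) with hI
    by_cases hIp : I ≤ p
    · exfalso
      apply hu
      have hsub : I • (⊤ : Submodule A B) ≤ Submodule.restrictScalars A q := by
        refine Submodule.smul_le.mpr fun i hi b _ => ?_
        show i • b ∈ q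
        rw [Algebra.smul_def]
        exact Ideal.mul_mem_right b q (hIp hi)
      exact hsub hmem
    · obtain ⟨s, hsI, hsp⟩ := SetLike.not_le_iff_exists.mp hIp
      refine ⟨⟨s, hsp⟩, ?_⟩
      simpa [hI, LinearMap.toSpanSingleton_apply] using hsI
  -- the target module, with its A-module structure
  have hsmul : ∀ (a : A) (y : LocalizedModule q.primeCompl (B ⊗[A] M)),
      (a • y : LocalizedModule q.primeCompl (B ⊗[A] M)) = (algebraMap A B a) • y :=
    fun a y => (algebraMap_smul B a y).symm
  let f : M →ₗ[A] LocalizedModule q.primeCompl (B ⊗[A] M) :=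
    { toFun := fun m => LocalizedModule.mk ((1 : B) ⊗ₜ[A] m) 1
      map_add' := fun m m' => by
        rw [LocalizedModule.mk_add_mk]
        simp [TensorProduct.tmul_add]
      map_smul' := fun a m => by
        rw [RingHom.id_apply, hsmul]
        show LocalizedModule.mk ((1 : B) ⊗ₜ[A] (a • m)) 1
          = (algebraMap A B a) • LocalizedModule.mk ((1 : B) ⊗ₜ[A] m) 1
        rw [LocalizedModule.smul'_mk, TensorProduct.tmul_smul,
          ← algebraMap_smul B a ((1 : B) ⊗ₜ[A] m)] }
  haveI hloc : IsLocalizedModule p.primeCompl f := by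
    constructor
    · -- map_units
      intro s
      rw [Module.End.isUnit_iff]
      have hunit : IsUnit (algebraMap B Bq (algebraMap A B s)) :=
        IsLocalization.map_units Bq (⟨algebraMap A B s, hq1 s s.2⟩ : q.primeCompl)
      obtain ⟨u, hu⟩ := hunit
      have hcoe : ∀ z : LocalizedModule q.primeCompl (B ⊗[A] M),
          (algebraMap A (Module.End A (LocalizedModule q.primeCompl (B ⊗[A] M))) s) z
            = u • z := by
        intro z
        rw [Module.algebraMap_end_apply, hsmul,
          ← algebraMap_smul Bq (algebraMap A B (s : A)) z, ← hu]
        rfl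
      have : ⇑(algebraMap A (Module.End A (LocalizedModule q.primeCompl (B ⊗[A] M))) s)
          = fun z => u • z := funext hcoe
      rw [this]
      exact (MulAction.bijective u)
    · -- surj'
      intro y
      induction y using LocalizedModule.induction_on with
      | _ z t =>
        have main : ∀ z : B ⊗[A] M, ∃ (m : M) (s : p.primeCompl),
            (s : A) • (LocalizedModule.mk z t : LocalizedModule q.primeCompl (B ⊗[A] M))
              = LocalizedModule.mk ((1 : B) ⊗ₜ[A] m) 1 := by
          intro z
          induction z using TensorProduct.induction_on with
          | zero =>
            refine ⟨0, 1, ?_⟩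
            rw [hsmul, LocalizedModule.smul'_mk]
            simp [LocalizedModule.zero_mk]
          | tmul b m₀ =>
            obtain ⟨a, s, u, huu⟩ := hrep b t
            refine ⟨a • m₀, s, ?_⟩
            rw [hsmul, LocalizedModule.smul'_mk, LocalizedModule.mk_eq]
            refine ⟨u, ?_⟩
            simp only [Submonoid.smul_def, OneMemClass.coe_one, one_smul]
            rw [TensorProduct.tmul_smul, ← algebraMap_smul B a ((1 : B) ⊗ₜ[A] m₀)]
            rw [smul_smul, smul_smul, smul_smul]
            rw [smul_tmul', smul_tmul']
            simp only [smul_eq_mul, mul_one]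
            exact congrArg (· ⊗ₜ[A] m₀) (by linear_combination huu)
          | add z₁ z₂ ih₁ ih₂ =>
            obtain ⟨m₁, s₁, h₁⟩ := ih₁
            obtain ⟨m₂, s₂, h₂⟩ := ih₂
            refine ⟨(s₂ : A) • m₁ + (s₁ : A) • m₂, s₁ * s₂, ?_⟩
            have hmksum : (LocalizedModule.mk (z₁ + z₂) t :
                LocalizedModule q.primeCompl (B ⊗[A] M))
                = LocalizedModule.mk z₁ t + LocalizedModule.mk z₂ t := by
              rw [LocalizedModule.mk_add_mk, LocalizedModule.mk_eq]
              refine ⟨1, ?_⟩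
              simp only [Submonoid.smul_def, OneMemClass.coe_one, one_smul, Submonoid.coe_mul,
                mul_smul, smul_add]
            have hco : ((s₁ * s₂ : p.primeCompl) : A) = (s₁ : A) * (s₂ : A) := rfl
            have e1 : ((s₁ * s₂ : p.primeCompl) : A) •
                (LocalizedModule.mk (z₁ + z₂) t : LocalizedModule q.primeCompl (B ⊗[A] M))
                = (s₂ : A) • ((s₁ : A) • LocalizedModule.mk z₁ t)
                  + (s₁ : A) • ((s₂ : A) • LocalizedModule.mk z₂ t) := by
              rw [hmksum, smul_add]
              congr 1
              · rw [hco, mul_comm, mul_smul]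
              · rw [hco, mul_smul]
            rw [e1, h₁, h₂]
            rw [hsmul, hsmul, LocalizedModule.smul'_mk, LocalizedModule.smul'_mk]
            rw [show (algebraMap A B (s₂ : A)) • ((1 : B) ⊗ₜ[A] m₁)
                = (1 : B) ⊗ₜ[A] ((s₂ : A) • m₁) from by
              rw [TensorProduct.tmul_smul, ← algebraMap_smul B (s₂ : A) ((1 : B) ⊗ₜ[A] m₁)]]
            rw [show (algebraMap A B (s₁ : A)) • ((1 : B) ⊗ₜ[A] m₂)
                = (1 : B) ⊗ₜ[A] ((s₁ : A) • m₂) from by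
              rw [TensorProduct.tmul_smul, ← algebraMap_smul B (s₁ : A) ((1 : B) ⊗ₜ[A] m₂)]]
            rw [LocalizedModule.mk_add_mk]
            simp [TensorProduct.tmul_add]
        obtain ⟨m, s, hm⟩ := main z
        exact ⟨(m, s), by rw [Submonoid.smul_def, hm]; rfl⟩
    · -- exists_of_eq
      intro m m' hmm'
      replace hmm' : (LocalizedModule.mk ((1 : B) ⊗ₜ[A] m) 1 :
          LocalizedModule q.primeCompl (B ⊗[A] M))
          = LocalizedModule.mk ((1 : B) ⊗ₜ[A] m') 1 := hmm'
      obtain ⟨u, hu⟩ := LocalizedModule.mk_eq.mp hmm'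
      simp only [one_smul, Submonoid.smul_def] at hu
      have h0 : (u : B) ⊗ₜ[A] (m - m') = 0 := by
        rw [TensorProduct.tmul_sub, sub_eq_zero]
        calc (u : B) ⊗ₜ[A] m = (u : B) • ((1 : B) ⊗ₜ[A] m) := by
              rw [smul_tmul', smul_eq_mul, mul_one]
          _ = (u : B) • ((1 : B) ⊗ₜ[A] m') := hu
          _ = (u : B) ⊗ₜ[A] m' := by rw [smul_tmul', smul_eq_mul, mul_one]
      obtain ⟨s, hs⟩ := htor u (m - m') h0 u.2
      refine ⟨s, ?_⟩
      rw [Submonoid.smul_def, Submonoid.smul_def]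
      rw [smul_sub, sub_eq_zero] at hs
      exact hs
  let g := IsLocalizedModule.iso p.primeCompl f
  refine ⟨⇑g, g.bijective, fun x y => map_add g x y, fun a x => ?_, fun m => ?_⟩
  · rw [map_smul]
    exact hsmul a (g x)
  · have h1 : g.symm (f m) = LocalizedModule.mk m 1 := by
      have h2 := LinearMap.congr_fun (IsLocalizedModule.iso_symm_comp p.primeCompl f) m
      exact h2
    calc g (LocalizedModule.mk m 1) = g (g.symm (f m)) := by rw [h1]
      _ = f m := g.apply_symm_apply _
end

section
/- Let k be a field and A a commutative k-algebra that is finite-dimensional as a k-vector space, and let k̄ be an algebraic closure of k. The following are equivalent: (i) A is an étale k-algebra; (ii) A is isomorphic as a k-algebra to a finite product ∏_{i∈I} K_i where each K_i is a finite separable field extension of k; (iii) the ring A ⊗_k k̄ is reduced; (iv) A ⊗_k k̄ is isomorphic as a k̄-algebra to a finite product of copies of k̄, namely k̄^{dim_k A}. -/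
open scoped TensorProduct

section Helpers

theorem IsArtinianRing.subtype_isMaximal_finite (R : Type) [CommRing R] [IsArtinianRing R] :
    Finite {I : Ideal R | I.IsMaximal} :=
  (IsArtinianRing.setOfPred_isMaximal_finite R).to_subtype

noncomputable abbrev IsArtinianRing.fieldOfSubtypeIsMaximal' (R : Type) [CommRing R]
    (I : {I : Ideal R | I.IsMaximal}) : Field (R ⧸ I.1) :=
  @Ideal.Quotient.field _ _ I.1 I.2

attribute [local instance] IsArtinianRing.subtype_isMaximal_finite
  IsArtinianRing.fieldOfSubtypeIsMaximal'

/-- Reindexing a finite product of algebras along an equivalence of index types. -/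
def algEquivPiCongrLeft' (R : Type) [CommSemiring R] {ι ι' : Type} (e : ι ≃ ι')
    (f : ι → Type) [∀ i, Semiring (f i)] [∀ i, Algebra R (f i)] :
    ((i : ι) → f i) ≃ₐ[R] ((j : ι') → f (e.symm j)) :=
  { Equiv.piCongrLeft' f e with
    map_mul' := fun _ _ => rfl
    map_add' := fun _ _ => rfl
    commutes' := fun _ => rfl }

/-- The `AlgEquiv` version of `IsArtinianRing.equivPi`. -/
noncomputable def myPiAlgEquiv (F B : Type) [CommSemiring F] [CommRing B] [Algebra F B]
    [IsArtinianRing B] [IsReduced B] :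
    B ≃ₐ[F] ∀ I : {I : Ideal B | I.IsMaximal}, B ⧸ I.1 :=
  AlgEquiv.ofRingEquiv (f := (IsArtinianRing.equivPi B).toRingEquiv.trans
    (RingEquiv.piCongrLeft' (fun m : MaximalSpectrum B => B ⧸ m.asIdeal)
      (⟨fun m => ⟨m.asIdeal, m.isMaximal⟩, fun I => ⟨I.1, I.2⟩, fun _ => rfl, fun _ => rfl⟩ :
        MaximalSpectrum B ≃ {I : Ideal B | I.IsMaximal}))) (fun r => by
    funext I
    rfl)

/-- If `K ⊗[k] M` is subsingleton then so is `M`. -/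
lemma subsingleton_of_subsingleton_tensor (k K M : Type) [Field k] [Field K] [Algebra k K]
    [AddCommGroup M] [Module k M] [Subsingleton (K ⊗[k] M)] : Subsingleton M := by
  have inj : Function.Injective (LinearMap.rTensor M (Algebra.linearMap k K)) :=
    Module.Flat.rTensor_preserves_injective_linearMap _ (algebraMap k K).injective
  have h1 : Subsingleton (k ⊗[k] M) := inj.subsingleton
  exact (TensorProduct.lid k M).toEquiv.symm.subsingleton

end Helpers

/-- For a field `k`, a commutative `k`-algebra `A` that is finite dimensional as a
`k`-vector space, and an algebraic closure `K` of `k`, the following are equivalent: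
(i) `A` is étale over `k`;
(ii) `A` is isomorphic as a `k`-algebra to a finite product of finite separable field
extensions of `k`;
(iii) `A ⊗_k K` is reduced;
(iv) `A ⊗_k K` is isomorphic as a `K`-algebra to `K^{dim_k A}`. -/
theorem stmt5 {k A K : Type} [Field k] [CommRing A] [Algebra k A]
    [FiniteDimensional k A] [Field K] [Algebra k K] [IsAlgClosure k K] :
    List.TFAE
      [Algebra.Etale k A,
        ∃ (n : ℕ) (L : Fin n → Type) (_ : ∀ i, Field (L i)) (_ : ∀ i, Algebra k (L i)),
          (∀ i, FiniteDimensional k (L i)) ∧ (∀ i, Algebra.IsSeparable k (L i)) ∧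
            Nonempty (A ≃ₐ[k] ((i : Fin n) → L i)),
        IsReduced (K ⊗[k] A),
        Nonempty ((K ⊗[k] A) ≃ₐ[K] (Fin (Module.finrank k A) → K))] := by
  classical
  haveI : IsAlgClosed K := IsAlgClosure.isAlgClosed k
  tfae_have 1 → 3
  | h1 => by
    haveI := h1
    haveI : Algebra.Etale K (K ⊗[k] A) := inferInstance
    exact Algebra.FormallyUnramified.isReduced_of_field K (K ⊗[k] A)
  tfae_have 3 → 4
  | h3 => by
    haveI : IsReduced (K ⊗[k] A) := h3
    haveI : IsArtinianRing (K ⊗[k] A) := IsArtinianRing.of_finite K (K ⊗[k] A)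
    set ι := {I : Ideal (K ⊗[k] A) | I.IsMaximal} with hι
    haveI : Finite ι := IsArtinianRing.subtype_isMaximal_finite _
    haveI := Fintype.ofFinite ι
    letI : ∀ I : ι, Field ((K ⊗[k] A) ⧸ I.1) := fun I =>
      IsArtinianRing.fieldOfSubtypeIsMaximal' _ I
    have e1 : (K ⊗[k] A) ≃ₐ[K] ∀ I : ι, (K ⊗[k] A) ⧸ I.1 := myPiAlgEquiv K _
    have e2 : ∀ I : ι, K ≃ₐ[K] ((K ⊗[k] A) ⧸ I.1) := fun I => by
      haveI : Module.Finite K ((K ⊗[k] A) ⧸ I.1) :=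
        Module.Finite.of_surjective (Ideal.Quotient.mkₐ K I.1).toLinearMap
          Ideal.Quotient.mk_surjective
      exact AlgEquiv.ofBijective (Algebra.ofId K _)
        ⟨(algebraMap K _).injective,
          IsAlgClosed.algebraMap_bijective_of_isIntegral.2⟩
    have eqv : (K ⊗[k] A) ≃ₐ[K] (ι → K) :=
      e1.trans (AlgEquiv.piCongrRight fun I => (e2 I).symm)
    have hcard : Fintype.card ι = Module.finrank k A := by
      have h1 : Module.finrank K (K ⊗[k] A) = Module.finrank k A :=
        Module.finrank_baseChange
      have h2 : Module.finrank K (K ⊗[k] A) = Module.finrank K (ι → K) :=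
        eqv.toLinearEquiv.finrank_eq
      rw [Module.finrank_pi] at h2
      omega
    have e3 : ι ≃ Fin (Module.finrank k A) := Fintype.equivFinOfCardEq hcard
    exact ⟨eqv.trans (algEquivPiCongrLeft' K e3 (fun _ => K))⟩
  tfae_have 4 → 2
  | h4 => by
    obtain ⟨e⟩ := h4
    haveI : Algebra.FormallyUnramified K (Fin (Module.finrank k A) → K) :=
      (Algebra.FormallyUnramified.pi_iff.{0,0} _).mpr fun _ => inferInstance
    haveI : Algebra.FormallyUnramified K (K ⊗[k] A) :=
      Algebra.FormallyUnramified.of_equiv e.symm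
    haveI hun : Algebra.FormallyUnramified k A := by
      rw [Algebra.formallyUnramified_iff]
      letI : Algebra A (K ⊗[k] A) := Algebra.TensorProduct.rightAlgebra
      haveI : IsScalarTower k A (K ⊗[k] A) := Algebra.TensorProduct.right_isScalarTower
      have e2 := KaehlerDifferential.tensorKaehlerEquivBase k K A (K ⊗[k] A)
      haveI : Subsingleton (K ⊗[k] Ω[A⁄k]) := e2.toEquiv.subsingleton
      exact subsingleton_of_subsingleton_tensor k K _
    haveI : IsReduced A := Algebra.FormallyUnramified.isReduced_of_field k A
    haveI : IsArtinianRing A := IsArtinianRing.of_finite k A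
    set ι := {I : Ideal A | I.IsMaximal} with hι
    haveI : Finite ι := IsArtinianRing.subtype_isMaximal_finite _
    haveI := Fintype.ofFinite ι
    letI : ∀ I : ι, Field (A ⧸ I.1) := fun I => IsArtinianRing.fieldOfSubtypeIsMaximal' _ I
    have e1 : A ≃ₐ[k] ∀ I : ι, A ⧸ I.1 := myPiAlgEquiv k A
    have eι : ι ≃ Fin (Fintype.card ι) := Fintype.equivFin ι
    refine ⟨Fintype.card ι, fun j => A ⧸ (eι.symm j).1, fun j => inferInstance,
      fun j => inferInstance, fun j => ?_, fun j => ?_, ⟨e1.trans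
        (algEquivPiCongrLeft' k eι (fun I : ι => A ⧸ I.1))⟩⟩
    · exact Module.Finite.of_surjective (Ideal.Quotient.mkₐ k (eι.symm j).1).toLinearMap
        Ideal.Quotient.mk_surjective
    · haveI : Algebra.FormallyUnramified k (A ⧸ (eι.symm j).1) :=
        Algebra.FormallyUnramified.of_surjective (Ideal.Quotient.mkₐ k (eι.symm j).1)
          Ideal.Quotient.mk_surjective
      haveI : Module.Finite k (A ⧸ (eι.symm j).1) :=
        Module.Finite.of_surjective (Ideal.Quotient.mkₐ k (eι.symm j).1).toLinearMap
          Ideal.Quotient.mk_surjective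
      exact Algebra.FormallyUnramified.isSeparable k _
  tfae_have 2 → 1
  | h2 => by
    obtain ⟨n, L, hF, hAlg, hfd, hsep, ⟨e⟩⟩ := h2
    letI iF : ∀ i, Field (L i) := hF
    letI iA : ∀ i, Algebra k (L i) := hAlg
    letI ifd : ∀ i, FiniteDimensional k (L i) := hfd
    letI isep : ∀ i, Algebra.IsSeparable k (L i) := hsep
    haveI : ∀ i, Algebra.FormallyEtale k (L i) := fun i =>
      Algebra.FormallyEtale.of_isSeparable k (L i)
    haveI : Algebra.FormallyEtale k (∀ i, L i) :=
      Algebra.FormallyEtale.iff_formallyUnramified_and_formallySmooth.mpr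
        ⟨(Algebra.FormallyUnramified.pi_iff.{0,0} _).mpr fun i =>
            (Algebra.FormallyEtale.iff_formallyUnramified_and_formallySmooth.mp inferInstance).1,
          (Algebra.FormallySmooth.pi_iff.{0,0} _).mpr fun i =>
            (Algebra.FormallyEtale.iff_formallyUnramified_and_formallySmooth.mp inferInstance).2⟩
    exact
      { formallyEtale := Algebra.FormallyEtale.of_equiv e.symm
        finitePresentation := Algebra.FinitePresentation.of_finiteType.mp inferInstance }
  tfae_finish
end

section
/- Let R be a nontrivial commutative ring whose only idempotent elements are 0 and 1, and let F and E be finite types. Then every R-algebra homomorphism f from the product R-algebra F → R (functions from F to R with pointwise operations) to the product R-algebra E → R is induced by composition with some map φ : E → F; that is, there exists φ : E → F such that f(a) = a ∘ φ for every a : F → R. -/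
/-- Let `R` be a nontrivial commutative ring whose only idempotents are `0` and `1`, and
let `F` and `E` be finite types.  Every `R`-algebra homomorphism `(F → R) →ₐ[R] (E → R)`
between the product `R`-algebras is induced by composition with some map `φ : E → F`. -/
theorem stmt11 {R : Type} [CommRing R] [Nontrivial R]
    (hid : ∀ e : R, IsIdempotentElem e → e = 0 ∨ e = 1)
    (F E : Type) [Finite F] [Finite E]
    (f : (F → R) →ₐ[R] (E → R)) :
    ∃ φ : E → F, ∀ a : F → R, f a = a ∘ φ := by
  cases isEmpty_or_nonempty E with
  | inl h => exact ⟨fun e => isEmptyElim e, fun a => funext fun e => isEmptyElim e⟩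
  | inr h =>
    have : Fintype F := Fintype.ofFinite F
    have : DecidableEq F := Classical.decEq F
    have key : ∀ e : E, ∃ x : F, ∀ a : F → R, f a e = a x := by
      intro e
      set g : (F → R) →ₐ[R] R := (Pi.evalAlgHom R (fun _ => R) e).comp f with hg
      set δ : F → (F → R) := fun x => Pi.single x (1 : R) with hδ
      have hmul : ∀ x y : F, δ x * δ y = if x = y then δ x else 0 := by
        intro x y
        funext j
        simp only [hδ, Pi.mul_apply, Pi.single_apply]
        by_cases hxy : x = y
        · subst hxy
          simp only [if_pos rfl]
          by_cases hj : j = x <;> simp [hj, Pi.single_apply]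
        · simp only [if_neg hxy, Pi.zero_apply]
          by_cases hj : j = x
          · subst hj
            rw [if_neg (fun hh : j = y => hxy hh), mul_zero]
          · rw [if_neg hj, zero_mul]
      have hidem : ∀ x : F, IsIdempotentElem (g (δ x)) := by
        intro x
        unfold IsIdempotentElem
        rw [← map_mul, hmul, if_pos rfl]
      have hsum : ∑ x : F, g (δ x) = 1 := by
        have : ∑ x : F, δ x = 1 := by
          funext j
          simp [hδ, Pi.single_apply, Finset.sum_ite_eq']
        rw [← map_sum, this, map_one]
      have hex : ∃ x : F, g (δ x) = 1 := by
        by_contra hc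
        push_neg at hc
        have : ∀ x : F, g (δ x) = 0 := fun x =>
          (hid _ (hidem x)).resolve_right (hc x)
        rw [Finset.sum_congr rfl (fun x _ => this x)] at hsum
        simp at hsum
      obtain ⟨x, hx⟩ := hex
      refine ⟨x, fun a => ?_⟩
      have hzero : ∀ y : F, y ≠ x → g (δ y) = 0 := by
        intro y hy
        have : g (δ x) * g (δ y) = 0 := by
          rw [← map_mul, hmul, if_neg (Ne.symm hy), map_zero]
        rwa [hx, one_mul] at this
      have ha : a = ∑ y : F, a y • δ y := by
        funext j
        simp [hδ, Pi.single_apply, Finset.sum_ite_eq']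
      calc f a e = g a := rfl
        _ = ∑ y : F, a y * g (δ y) := by
            conv_lhs => rw [ha]
            rw [map_sum]; simp [Algebra.smul_def, mul_comm]
        _ = a x := by
            rw [Finset.sum_eq_single x (fun y _ hy => by rw [hzero y hy, mul_zero])
              (fun hxm => absurd (Finset.mem_univ x) hxm)]
            rw [hx, mul_one]
    choose φ hφ using key
    exact ⟨φ, fun a => funext fun e => hφ e a⟩
end

section
/- Let J be a nonempty connected small category and F : J ⥤ Top a functor to topological spaces such that for every object j of J the space F(j) is connected (in particular nonempty). Then the colimit of F in the category of topological spaces is a connected topological space. -/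
open CategoryTheory
open CategoryTheory.Limits

/-- Let `J` be a nonempty connected small category and `F : J ⥤ Top` a functor such that
every `F(j)` is a connected topological space.  Then the colimit of `F` in `Top` is a
connected topological space. -/
theorem stmt12 {J : Type} [SmallCategory J] [IsConnected J]
    (F : J ⥤ TopCat.{0}) (h : ∀ j : J, ConnectedSpace (F.obj j)) :
    ConnectedSpace ↥(CategoryTheory.Limits.colimit F) := by
  -- images of the colimit cocone legs
  set S : J → Set ↥(colimit F) := fun j => Set.range (colimit.ι F j) with hS
  have hSconn : ∀ j, IsPreconnected (S j) := fun j =>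
    (isPreconnected_range (colimit.ι F j).hom.continuous)
  have hSne : ∀ j, (S j).Nonempty := fun j => Set.range_nonempty _
  have hmono : ∀ {j k : J} (f : j ⟶ k), S j ⊆ S k := by
    intro j k f x hx
    obtain ⟨y, rfl⟩ := hx
    exact ⟨F.map f y, by rw [← comp_apply, colimit.w F f]⟩
  -- joint surjectivity
  have hsurj : ∀ x : ↥(colimit F), ∃ j, x ∈ S j := by
    intro x
    obtain ⟨j, y, hy⟩ := Types.jointly_surjective_of_isColimit
      (isColimitOfPreserves (forget TopCat) (colimit.isColimit F)) x
    exact ⟨j, y, hy⟩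
  obtain ⟨j₀⟩ := (inferInstance : Nonempty J)
  -- for each j, there is a preconnected set containing S j₀ and S j
  have key : ∀ j : J, j ∈ {j | ∃ T : Set ↥(colimit F),
      IsPreconnected T ∧ S j₀ ⊆ T ∧ S j ⊆ T} := by
    apply induct_on_objects
    · exact ⟨S j₀, hSconn j₀, le_refl _, le_refl _⟩
    · intro j₁ j₂ f
      constructor
      · rintro ⟨T, hT, h0, h1⟩
        refine ⟨T ∪ S j₂, ?_, h0.trans Set.subset_union_left, Set.subset_union_right⟩
        obtain ⟨x, hx⟩ := hSne j₁
        exact hT.union x (h1 hx) (hmono f hx) (hSconn j₂)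
      · rintro ⟨T, hT, h0, h2⟩
        exact ⟨T, hT, h0, (hmono f).trans h2⟩
  obtain ⟨x₀, hx₀⟩ := hSne j₀
  have : PreconnectedSpace ↥(colimit F) := by
    constructor
    apply isPreconnected_of_forall x₀
    intro y _
    obtain ⟨j, hy⟩ := hsurj y
    obtain ⟨T, hT, h0, hj⟩ := key j
    exact ⟨T, fun z _ => trivial, h0 hx₀, hj hy, hT⟩
  exact ⟨⟨x₀⟩⟩
end

section
/- Let A be a commutative ring, B a commutative A-algebra, G a finite group acting on B by A-algebra automorphisms, and C a flat commutative A-algebra. Let G act on B ⊗_A C through the first factor. Then the natural map (B^G) ⊗_A C → (B ⊗_A C)^G is bijective, where B^G denotes the subalgebra of G-invariant elements of B. -/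
open scoped TensorProduct

/-- The subalgebra of invariants of an action of a group `G` on an `A`-algebra `B` by
`A`-algebra automorphisms, the action being given by `ρ : G →* (B ≃ₐ[A] B)`. -/
def fixedSubalgebra {A B G : Type} [CommRing A] [CommRing B] [Algebra A B] [Group G]
    (ρ : G →* (B ≃ₐ[A] B)) : Subalgebra A B where
  carrier := {b | ∀ g : G, ρ g b = b}
  mul_mem' := by intro a b ha hb g; rw [map_mul, ha g, hb g]
  one_mem' := by intro g; rw [map_one]
  add_mem' := by intro a b ha hb g; rw [map_add, ha g, hb g]
  zero_mem' := by intro g; rw [map_zero]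
  algebraMap_mem' := by intro r g; exact (ρ g).commutes r

/-- Let `A` be a commutative ring, `B` a commutative `A`-algebra, `G` a finite group acting
on `B` by `A`-algebra automorphisms, and `C` a flat commutative `A`-algebra, with `G`
acting on `B ⊗_A C` through the first factor.  Then the natural map
`B^G ⊗_A C → (B ⊗_A C)^G` is bijective; equivalently, the canonical map
`B^G ⊗_A C → B ⊗_A C` is injective with image exactly the `G`-invariants of `B ⊗_A C`. -/
theorem stmt13 {A B C G : Type} [CommRing A] [CommRing B] [Algebra A B]
    [CommRing C] [Algebra A C] [Group G] [Finite G]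
    (ρ : G →* (B ≃ₐ[A] B)) (hC : Module.Flat A C) :
    Function.Injective
        ⇑(Algebra.TensorProduct.map (fixedSubalgebra ρ).val (AlgHom.id A C)) ∧
      Set.range ⇑(Algebra.TensorProduct.map (fixedSubalgebra ρ).val (AlgHom.id A C)) =
        {x : B ⊗[A] C | ∀ g : G,
          Algebra.TensorProduct.map (ρ g).toAlgHom (AlgHom.id A C) x = x} := by
  classical
  haveI := hC
  haveI := Fintype.ofFinite G
  set S := fixedSubalgebra ρ with hS
  let ι : ↥S →ₗ[A] B := S.val.toLinearMap
  let f : B →ₗ[A] (G → B) :=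
    LinearMap.pi (fun g => ((ρ g).toAlgHom : B →ₐ[A] B).toLinearMap - LinearMap.id)
  have hιinj : Function.Injective ι := Subtype.val_injective
  have hex : Function.Exact ι f := by
    intro b
    constructor
    · intro hb
      have hbg : ∀ g : G, ρ g b = b := by
        intro g
        have := congrFun hb g
        simpa [f, sub_eq_zero] using this
      exact ⟨⟨b, hbg⟩, rfl⟩
    · rintro ⟨⟨b, hb⟩, rfl⟩
      funext g
      simp [f, ι, hb g]
  have hexT : Function.Exact (ι.rTensor C) (f.rTensor C) := Module.Flat.rTensor_exact C hex
  -- equality of the algebra map and rTensor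
  have h1 : ∀ (h : B →ₐ[A] B),
      (Algebra.TensorProduct.map h (AlgHom.id A C)).toLinearMap = LinearMap.rTensor C h.toLinearMap := by
    intro h; ext; simp
  have h2 : (Algebra.TensorProduct.map S.val (AlgHom.id A C)).toLinearMap = LinearMap.rTensor C ι := by
    ext; simp [ι]
  -- components detect zero in (G → B) ⊗ C
  have hcomp : ∀ g : G, (LinearMap.proj g : (G → B) →ₗ[A] B).rTensor C ∘ₗ f.rTensor C
      = (((ρ g).toAlgHom : B →ₐ[A] B).toLinearMap - LinearMap.id).rTensor C := by
    intro g
    rw [← LinearMap.rTensor_comp, LinearMap.proj_pi]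
  have hzero : ∀ y : (G → B) ⊗[A] C,
      (∀ g : G, (LinearMap.proj g : (G → B) →ₗ[A] B).rTensor C y = 0) → y = 0 := by
    intro y hy
    have hrel : ∀ g : G,
        (LinearMap.proj g : (G → C ⊗[A] B) →ₗ[A] C ⊗[A] B) ∘ₗ
            (TensorProduct.piRight A A C (fun _ : G => B)).toLinearMap ∘ₗ
            (TensorProduct.comm A (G → B) C).toLinearMap
          = (TensorProduct.comm A B C).toLinearMap ∘ₗ
            (LinearMap.proj g : (G → B) →ₗ[A] B).rTensor C := by
      intro g
      apply TensorProduct.ext'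
      intro m c
      simp
    have : (TensorProduct.piRight A A C (fun _ : G => B))
        ((TensorProduct.comm A (G → B) C) y) = 0 := by
      funext g
      have h := LinearMap.congr_fun (hrel g) y
      simp only [LinearMap.coe_comp, Function.comp_apply, LinearEquiv.coe_coe,
        LinearMap.proj_apply] at h
      show (TensorProduct.piRight A A C (fun _ : G => B))
        ((TensorProduct.comm A (G → B) C) y) g = 0
      rw [h, hy g, map_zero]
    have h4 : (TensorProduct.comm A (G → B) C) y = 0 :=
      (LinearEquiv.map_eq_zero_iff _).mp this
    exact (LinearEquiv.map_eq_zero_iff _).mp h4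
  constructor
  · have hinj : Function.Injective (LinearMap.rTensor C ι) :=
      Module.Flat.rTensor_preserves_injective_linearMap ι hιinj
    have : Function.Injective ⇑(Algebra.TensorProduct.map S.val (AlgHom.id A C)).toLinearMap := by
      rw [h2]; exact hinj
    exact this
  · have hrange : Set.range ⇑(Algebra.TensorProduct.map S.val (AlgHom.id A C))
        = Set.range ⇑(LinearMap.rTensor C ι) := by
      rw [← h2]; rfl
    rw [hrange]
    ext x
    simp only [Set.mem_setOf_eq]
    rw [← hexT x]
    constructor
    · intro hx g
      have := congrArg (fun L => (LinearMap.proj g : (G → B) →ₗ[A] B).rTensor C L) hx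
      simp only [map_zero] at this
      have h3 : (((ρ g).toAlgHom : B →ₐ[A] B).toLinearMap - LinearMap.id).rTensor C x = 0 := by
        rw [← hcomp g]; exact this
      rw [LinearMap.rTensor_sub, LinearMap.sub_apply, LinearMap.rTensor_id,
        LinearMap.id_apply, sub_eq_zero, ← h1 (ρ g).toAlgHom] at h3
      exact h3
    · intro hx
      apply hzero
      intro g
      have := LinearMap.congr_fun (hcomp g) x
      simp only [LinearMap.coe_comp, Function.comp_apply] at this
      rw [this, LinearMap.rTensor_sub, LinearMap.sub_apply, LinearMap.rTensor_id,
        LinearMap.id_apply, sub_eq_zero, ← h1 (ρ g).toAlgHom]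
      exact hx g
end

section
/- Let φ : A → B be a homomorphism of commutative rings such that B is finitely generated as an A-module (φ is finite) and φ is an epimorphism in the category of commutative rings. Then φ is surjective. -/
/-- A ring homomorphism `φ : A → B` that is finite (i.e. `B` is finitely generated as an
`A`-module) and is an epimorphism in the category of commutative rings is surjective. -/
theorem stmt14 {A B : Type} [CommRing A] [CommRing B] (φ : A →+* B)
    (hfin : φ.Finite)
    (hepi : ∀ (C : Type) [CommRing C] (g h : B →+* C), g.comp φ = h.comp φ → g = h) :
    Function.Surjective φ := by
  have : CategoryTheory.Epi (CommRingCat.ofHom φ) := by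
    constructor
    intro C g h e
    exact CommRingCat.hom_ext (hepi C g.hom h.hom (by rw [← CommRingCat.hom_ofHom φ, ← CommRingCat.hom_comp, ← CommRingCat.hom_comp, e]))
  exact RingHom.surjective_of_epi_of_finite (CommRingCat.ofHom φ) hfin
end

section
/- Let R be a Noetherian commutative ring and A a commutative R-algebra. Suppose there exist a natural number n and an R-algebra B that is finitely generated as an R-module and faithfully flat over R, together with an isomorphism of B-algebras A ⊗_R B ≅ B^n. Then A is a finite étale R-algebra. -/
open scoped TensorProduct

section helpers

variable (R B : Type) [CommRing R] [CommRing B] [Algebra R B]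

/-- contraction of the first two tensor factors -/
noncomputable def ffContract (N : Type) [AddCommGroup N] [Module R N] :
    B ⊗[R] (B ⊗[R] N) →ₗ[R] B ⊗[R] N :=
  (LinearMap.rTensor N (LinearMap.mul' R B)).comp (TensorProduct.assoc R B B N).symm.toLinearMap

@[simp] lemma ffContract_tmul (N : Type) [AddCommGroup N] [Module R N] (b b' : B) (x : N) :
    ffContract R B N (b ⊗ₜ (b' ⊗ₜ x)) = (b * b') ⊗ₜ x := by
  simp [ffContract]

variable [Module.FaithfullyFlat R B]

lemma ff_one_tmul_injective (M : Type) [AddCommGroup M] [Module R M] :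
    Function.Injective (TensorProduct.mk R B M 1) := by
  rw [injective_iff_map_eq_zero]
  intro m hm
  have hz : LinearMap.toSpanSingleton R M m = 0 := by
    rw [Module.FaithfullyFlat.zero_iff_lTensor_zero R B]
    apply TensorProduct.ext'
    intro b r
    have hm' : (1 : B) ⊗ₜ[R] m = 0 := hm
    simp only [LinearMap.lTensor_tmul, LinearMap.toSpanSingleton_apply, LinearMap.zero_apply,
      TensorProduct.tmul_smul]
    have h2 : (b : B) ⊗ₜ[R] m = b • ((1 : B) ⊗ₜ[R] m) := by
      rw [TensorProduct.smul_tmul', smul_eq_mul, mul_one]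
    rw [h2, hm', smul_zero, smul_zero]
  simpa using congrArg (fun f => f 1) hz

lemma ff_amitsur_exact (M : Type) [AddCommGroup M] [Module R M] :
    Function.Exact (TensorProduct.mk R B M 1)
      ((TensorProduct.mk R B (B ⊗[R] M) 1) - LinearMap.lTensor B (TensorProduct.mk R B M 1)) := by
  set δ : M →ₗ[R] B ⊗[R] M := TensorProduct.mk R B M 1 with hδ
  set d : B ⊗[R] M →ₗ[R] B ⊗[R] (B ⊗[R] M) :=
    (TensorProduct.mk R B (B ⊗[R] M) 1) - LinearMap.lTensor B δ with hd
  apply Module.FaithfullyFlat.lTensor_reflects_exact R B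
  have h1 : (ffContract R B M).comp (LinearMap.lTensor B δ) = LinearMap.id := by
    apply TensorProduct.ext'
    intro b m
    simp [hδ, TensorProduct.mk_apply]
  have h2 : (ffContract R B (B ⊗[R] M)).comp (LinearMap.lTensor B d)
      = LinearMap.id - (LinearMap.lTensor B δ).comp (ffContract R B M) := by
    apply TensorProduct.ext'
    intro b y
    induction y with
    | zero => simp
    | add u v hu hv =>
        simp only [TensorProduct.tmul_add, map_add] at hu hv ⊢
        rw [hu, hv]
    | tmul b' m =>
        simp only [hd, hδ, LinearMap.comp_apply, LinearMap.lTensor_tmul, LinearMap.sub_apply,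
          TensorProduct.mk_apply, TensorProduct.tmul_sub, map_sub, ffContract_tmul,
          LinearMap.id_apply, mul_one]
  have hdδ : d.comp δ = 0 := by
    ext m
    simp [hd, hδ]
  intro y
  constructor
  · intro hy
    have h3 := congrArg (fun f => f y) h2
    simp only [LinearMap.comp_apply, LinearMap.sub_apply, LinearMap.id_apply] at h3
    rw [hy, map_zero] at h3
    exact ⟨ffContract R B M y, by rw [← sub_eq_zero]; exact (neg_eq_zero.mp (by rw [neg_sub, ← h3]))⟩
  · rintro ⟨x, rfl⟩
    rw [← LinearMap.comp_apply, ← LinearMap.lTensor_comp, hdδ, LinearMap.lTensor_zero,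
      LinearMap.zero_apply]

end helpers

set_option maxHeartbeats 1000000 in
/-- Let `R` be a Noetherian commutative ring and `A` a commutative `R`-algebra.  If there
exist `n : ℕ` and an `R`-algebra `B`, finitely generated as an `R`-module and faithfully
flat over `R`, with `A ⊗_R B ≅ B^n` as `B`-algebras, then `A` is a finite étale
`R`-algebra. -/
theorem stmt17 {R A B : Type} [CommRing R] [IsNoetherianRing R] [CommRing A] [Algebra R A]
    [CommRing B] [Algebra R B] (n : ℕ)
    (hfinB : Module.Finite R B) (hff : Module.FaithfullyFlat R B)
    (e : (B ⊗[R] A) ≃ₐ[B] (Fin n → B)) :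
    Algebra.Etale R A ∧ Module.Finite R A := by
  -- Finiteness
  haveI hfinBA : Module.Finite B (B ⊗[R] A) := Module.Finite.equiv e.symm.toLinearEquiv
  haveI hfinRBA : Module.Finite R (B ⊗[R] A) := Module.Finite.trans B (B ⊗[R] A)
  haveI : IsNoetherian R (B ⊗[R] A) := isNoetherian_of_isNoetherianRing_of_finite R _
  haveI : IsNoetherian R A :=
    isNoetherian_of_injective (TensorProduct.mk R B A 1) (ff_one_tmul_injective R B A)
  haveI hfinA : Module.Finite R A := inferInstance
  -- Unramifiedness, by descent of uniqueness of liftings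
  haveI : Algebra.FormallyUnramified B (Fin n → B) :=
    (Algebra.FormallyUnramified.pi_iff _).mpr fun _ => inferInstance
  haveI : Algebra.FormallyUnramified B (B ⊗[R] A) := Algebra.FormallyUnramified.of_equiv e.symm
  haveI hU : Algebra.FormallyUnramified R A := by
    rw [Algebra.FormallyUnramified.iff_comp_injective]
    intro C _ _ I hI f₁ f₂ hf
    let inc : C →ₐ[R] B ⊗[R] C := Algebra.TensorProduct.includeRight
    let J : Ideal (B ⊗[R] C) := I.map inc
    have hJ : J ^ 2 = ⊥ := by
      rw [← Ideal.map_pow, hI, Ideal.map_bot]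
    let u₁ : B ⊗[R] A →ₐ[B] B ⊗[R] C := Algebra.TensorProduct.map (AlgHom.id B B) f₁
    let u₂ : B ⊗[R] A →ₐ[B] B ⊗[R] C := Algebra.TensorProduct.map (AlgHom.id B B) f₂
    have key : u₁ = u₂ := by
      apply Algebra.FormallyUnramified.ext J ⟨2, hJ⟩
      intro x
      induction x with
      | zero => simp
      | add u v hu hv => rw [map_add, map_add, map_add, map_add, hu, hv]
      | tmul b a =>
          have h1 : f₁ a - f₂ a ∈ I := by
            rw [← Ideal.Quotient.mk_eq_mk_iff_sub_mem]
            exact congrArg (fun g => g a) hf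
          have h2 : (b ⊗ₜ[R] f₁ a) - (b ⊗ₜ[R] f₂ a) ∈ J := by
            have : b ⊗ₜ[R] (f₁ a - f₂ a) = b • ((1 : B) ⊗ₜ[R] (f₁ a - f₂ a)) := by
              rw [TensorProduct.smul_tmul', smul_eq_mul, mul_one]
            rw [← TensorProduct.tmul_sub, this]
            exact Submodule.smul_of_tower_mem J b (Ideal.mem_map_of_mem inc h1)
          rw [Ideal.Quotient.mk_eq_mk_iff_sub_mem]
          simpa [u₁, u₂] using h2
    ext a
    apply ff_one_tmul_injective R B C
    have hk := congrArg (fun g => g ((1:B) ⊗ₜ[R] a)) key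
    simpa [u₁, u₂, TensorProduct.mk_apply] using hk
  -- Smoothness, by descent of existence of liftings
  haveI : Algebra.FormallySmooth B B :=
    Algebra.FormallySmooth.of_equiv (MvPolynomial.isEmptyAlgEquiv B PEmpty.{1})
  haveI : Algebra.FormallySmooth B (Fin n → B) :=
    (Algebra.FormallySmooth.pi_iff _).mpr fun _ => inferInstance
  haveI : Algebra.FormallySmooth B (B ⊗[R] A) := Algebra.FormallySmooth.of_equiv e.symm
  haveI hS : Algebra.FormallySmooth R A := by
    apply Algebra.FormallySmooth.of_comp_surjective
    intro C _ _ I hI f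
    let inc : C →ₐ[R] B ⊗[R] C := Algebra.TensorProduct.includeRight
    let J : Ideal (B ⊗[R] C) := I.map inc
    have hJ : J ^ 2 = ⊥ := by rw [← Ideal.map_pow, hI, Ideal.map_bot]
    -- the induced map on quotients
    have hle : I ≤ J.comap inc := fun x hx => Ideal.mem_map_of_mem inc hx
    let q : (C ⧸ I) →ₐ[R] (B ⊗[R] C) ⧸ J := Ideal.quotientMapₐ J inc hle
    have hq : ∀ c : C, q (Ideal.Quotient.mk I c) = Ideal.Quotient.mk J (inc c) := fun c => rfl
    let ρ : B ⊗[R] C →ₐ[B] B ⊗[R] (C ⧸ I) :=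
      Algebra.TensorProduct.map (AlgHom.id B B) (Ideal.Quotient.mkₐ R I)
    have hJker : J ≤ RingHom.ker ρ := by
      rw [Ideal.map_le_iff_le_comap]
      intro i hi
      simp [ρ, inc, RingHom.mem_ker, Algebra.TensorProduct.includeRight_apply,
        Algebra.TensorProduct.map_tmul, Ideal.Quotient.mkₐ_eq_mk,
        Ideal.Quotient.eq_zero_iff_mem.mpr hi]
    have hqinj : Function.Injective q := by
      intro x y hxy
      obtain ⟨c, rfl⟩ := Ideal.Quotient.mk_surjective x
      obtain ⟨c', rfl⟩ := Ideal.Quotient.mk_surjective y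
      rw [Ideal.Quotient.mk_eq_mk_iff_sub_mem]
      rw [hq, hq, Ideal.Quotient.mk_eq_mk_iff_sub_mem, ← map_sub] at hxy
      have h0 : ρ (inc (c - c')) = 0 := hJker hxy
      have h1 : (TensorProduct.mk R B (C ⧸ I) 1) (Ideal.Quotient.mk I (c - c')) =
          (TensorProduct.mk R B (C ⧸ I) 1) 0 := by
        simpa [ρ, inc, Algebra.TensorProduct.includeRight_apply,
          Algebra.TensorProduct.map_tmul, Ideal.Quotient.mkₐ_eq_mk,
          TensorProduct.mk_apply] using h0
      have h2 := ff_one_tmul_injective R B (C ⧸ I) h1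
      exact Ideal.Quotient.eq_zero_iff_mem.mp h2
    -- lift the base-changed map over D
    let ψ : (B ⊗[R] A) →ₐ[B] (B ⊗[R] C) ⧸ J :=
      Algebra.TensorProduct.lift (Algebra.ofId B ((B ⊗[R] C) ⧸ J)) (q.comp f) (fun _ _ => Commute.all _ _)
    obtain ⟨g, hg⟩ := Algebra.FormallySmooth.comp_surjective B (B ⊗[R] A) J hJ ψ
    let h : A →ₐ[R] B ⊗[R] C := (g.restrictScalars R).comp
      (Algebra.TensorProduct.includeRight : A →ₐ[R] B ⊗[R] A)
    have hgh : ∀ a, Ideal.Quotient.mk J (h a) = q (f a) := by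
      intro a
      have h3 := congrArg (fun t => t ((1:B) ⊗ₜ[R] a)) hg
      simpa [ψ, h, Algebra.TensorProduct.lift_tmul, Algebra.ofId_apply,
        Ideal.Quotient.mkₐ_eq_mk, map_one, one_mul] using h3
    -- descent: h equalizes the two inclusions into B ⊗ D
    let t₁ : B ⊗[R] C →ₐ[R] B ⊗[R] (B ⊗[R] C) := Algebra.TensorProduct.includeRight
    let t₂ : B ⊗[R] C →ₐ[R] B ⊗[R] (B ⊗[R] C) := Algebra.TensorProduct.map (AlgHom.id R B) inc
    let inc2 : C →ₐ[R] B ⊗[R] (B ⊗[R] C) := t₁.comp inc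
    let J2 : Ideal (B ⊗[R] (B ⊗[R] C)) := I.map inc2
    have hJ2 : J2 ^ 2 = ⊥ := by rw [← Ideal.map_pow, hI, Ideal.map_bot]
    have hmapJ : ∀ (t : B ⊗[R] C →ₐ[R] B ⊗[R] (B ⊗[R] C)),
        (∀ c, t (inc c) = inc2 c) → ∀ x ∈ J, t x ∈ J2 := by
      intro t ht x hx
      have h5 : J ≤ Ideal.comap t J2 := Ideal.map_le_iff_le_comap.mpr (fun i hi => by
        simp only [Ideal.mem_comap, ht]
        exact Ideal.mem_map_of_mem inc2 hi)
      exact h5 hx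
    have hteq : t₁.comp h = t₂.comp h := by
      apply Algebra.FormallyUnramified.ext J2 ⟨2, hJ2⟩
      intro a
      obtain ⟨c, hc⟩ := Ideal.Quotient.mk_surjective (f a)
      have hmem : h a - inc c ∈ J := by
        rw [← Ideal.Quotient.mk_eq_mk_iff_sub_mem, hgh a, ← hc, hq]
      have m1 : t₁ (h a) - t₁ (inc c) ∈ J2 := by
        rw [← map_sub]; exact hmapJ t₁ (fun _ => rfl) _ hmem
      have m2 : t₂ (h a) - t₂ (inc c) ∈ J2 := by
        rw [← map_sub]
        refine hmapJ t₂ (fun c => ?_) _ hmem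
        simp [t₂, inc, inc2, t₁, Algebra.TensorProduct.includeRight_apply,
          Algebra.TensorProduct.map_tmul]
      have e1 : t₁ (inc c) = t₂ (inc c) := by
        simp [t₁, t₂, inc, Algebra.TensorProduct.includeRight_apply,
          Algebra.TensorProduct.map_tmul]
      simp only [AlgHom.comp_apply]
      calc Ideal.Quotient.mk J2 (t₁ (h a))
          = Ideal.Quotient.mk J2 (t₁ (inc c)) :=
            (Ideal.Quotient.mk_eq_mk_iff_sub_mem _ _).mpr m1
        _ = Ideal.Quotient.mk J2 (t₂ (inc c)) := by rw [e1]
        _ = Ideal.Quotient.mk J2 (t₂ (h a)) :=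
            ((Ideal.Quotient.mk_eq_mk_iff_sub_mem _ _).mpr m2).symm
    have ht2lin : ∀ x : B ⊗[R] C, t₂ x = (LinearMap.lTensor B (TensorProduct.mk R B C 1)) x := by
      intro x
      induction x with
      | zero => simp
      | add u v hu hv => rw [map_add, map_add, hu, hv]
      | tmul b c =>
          simp [t₂, inc, Algebra.TensorProduct.map_tmul,
            Algebra.TensorProduct.includeRight_apply, TensorProduct.mk_apply]
    have hrange : ∀ a : A, h a ∈ Set.range (TensorProduct.mk R B C 1) := by
      intro a
      apply (ff_amitsur_exact R B C (h a)).mp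
      have h4 := congrArg (fun t => t a) hteq
      simp only [AlgHom.comp_apply] at h4
      rw [LinearMap.sub_apply, ← ht2lin (h a), sub_eq_zero]
      exact h4
    have hincinj : Function.Injective inc := fun x y hxy => ff_one_tmul_injective R B C hxy
    have hmem' : ∀ a, h a ∈ inc.range := by
      intro a
      obtain ⟨c, hc⟩ := hrange a
      exact ⟨c, hc⟩
    let F : A →ₐ[R] C := ((AlgEquiv.ofInjective inc hincinj).symm.toAlgHom).comp
      (h.codRestrict inc.range hmem')
    refine ⟨F, ?_⟩
    ext a
    have hFa : inc (F a) = h a := by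
      have h6 := congrArg Subtype.val
        (AlgEquiv.apply_symm_apply (AlgEquiv.ofInjective inc hincinj) ⟨h a, hmem' a⟩)
      rw [AlgEquiv.ofInjective_apply] at h6
      exact h6
    have h7 : q (Ideal.Quotient.mk I (F a)) = q (f a) := by
      calc q (Ideal.Quotient.mk I (F a)) = Ideal.Quotient.mk J (inc (F a)) := hq _
        _ = Ideal.Quotient.mk J (h a) := by rw [hFa]
        _ = q (f a) := hgh a
    simpa [Ideal.Quotient.mkₐ_eq_mk] using hqinj h7
  haveI : Algebra.FinitePresentation R A :=
    Algebra.FinitePresentation.of_finiteType.mp inferInstance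
  exact ⟨{ formallyEtale := Algebra.FormallyEtale.of_formallyUnramified_and_formallySmooth }, hfinA⟩
end

section
/- Let A be a nonzero Noetherian commutative ring whose prime spectrum is connected, and let B₁ and B₂ be nonzero A-algebras, each finitely generated and flat as an A-module, such that the product algebra B₁ × B₂ is faithfully flat over A. Then the tensor product B₁ ⊗_A B₂ is nonzero. -/
open scoped TensorProduct


lemma aux_finrank_zero_iff {R M : Type*} [CommRing R] [Nontrivial R] [AddCommGroup M]
    [Module R M] [Module.Free R M] [Module.Finite R M] :
    Module.finrank R M = 0 ↔ Subsingleton M := by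
  rw [Module.finrank_eq_card_chooseBasisIndex, Fintype.card_eq_zero_iff]
  constructor
  · intro h
    have e := (Module.Free.chooseBasis R M).repr
    exact e.toEquiv.subsingleton
  · intro h
    by_contra hc
    rw [not_isEmpty_iff] at hc
    obtain ⟨i⟩ := hc
    exact (Module.Free.chooseBasis R M).ne_zero i (Subsingleton.elim _ _)

lemma aux_nontrivial_tensor_iff {A M : Type*} [CommRing A] [AddCommGroup M] [Module A M]
    (p : PrimeSpectrum A) :
    Nontrivial (Localization.AtPrime p.asIdeal ⊗[A] M) ↔
      Nontrivial (LocalizedModule p.asIdeal.primeCompl M) := by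
  haveI : IsLocalizedModule p.asIdeal.primeCompl
      (TensorProduct.mk A (Localization.AtPrime p.asIdeal) M 1) :=
    (isLocalizedModule_iff_isBaseChange p.asIdeal.primeCompl _ _).mpr
      (TensorProduct.isBaseChange A M (Localization.AtPrime p.asIdeal))
  let e := (IsLocalizedModule.iso p.asIdeal.primeCompl
    (TensorProduct.mk A (Localization.AtPrime p.asIdeal) M 1)).toEquiv
  exact ⟨fun h => @Equiv.nontrivial _ _ e h, fun h => @Equiv.nontrivial _ _ e.symm h⟩

lemma aux_isOpen_support {A M : Type*} [CommRing A] [IsNoetherianRing A] [AddCommGroup M]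
    [Module A M] [Module.Finite A M] [Module.Flat A M] :
    IsOpen (Module.support A M) := by
  haveI : Module.FinitePresentation A M := Module.finitePresentation_of_finite A M
  have hlc := Module.isLocallyConstant_rankAtStalk (R := A) (M := M)
  have hs : Module.support A M = Module.rankAtStalk M ⁻¹' ({0}ᶜ) := by
    ext p
    haveI hfree : Module.Free (Localization.AtPrime p.asIdeal)
        (LocalizedModule p.asIdeal.primeCompl M) :=
      Module.mem_freeLocus.mp (Module.freeLocus_eq_univ (R := A) (M := M) ▸ Set.mem_univ p)
    haveI : Module.Finite (Localization.AtPrime p.asIdeal)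
        (LocalizedModule p.asIdeal.primeCompl M) :=
      Module.Finite.of_isLocalizedModule p.asIdeal.primeCompl
        (LocalizedModule.mkLinearMap p.asIdeal.primeCompl M)
    simp only [Set.mem_preimage, Set.mem_compl_iff, Set.mem_singleton_iff,
      Module.mem_support_iff, Module.rankAtStalk]
    rw [← not_iff_not, not_nontrivial_iff_subsingleton, not_not, aux_finrank_zero_iff]
  rw [hs]
  exact hlc _


set_option maxHeartbeats 1000000 in
/-- Let `A` be a nonzero Noetherian commutative ring with connected prime spectrum, and
let `B₁`, `B₂` be nonzero `A`-algebras, each finitely generated and flat as an `A`-module,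
such that `B₁ × B₂` is faithfully flat over `A`.  Then `B₁ ⊗_A B₂` is nonzero. -/
theorem stmt18 {A B₁ B₂ : Type} [CommRing A] [Nontrivial A] [IsNoetherianRing A]
    [ConnectedSpace (PrimeSpectrum A)]
    [CommRing B₁] [Algebra A B₁] [CommRing B₂] [Algebra A B₂]
    [Nontrivial B₁] [Nontrivial B₂]
    (h₁fin : Module.Finite A B₁) (h₁flat : Module.Flat A B₁)
    (h₂fin : Module.Finite A B₂) (h₂flat : Module.Flat A B₂)
    (hff : Module.FaithfullyFlat A (B₁ × B₂)) :
    Nontrivial (B₁ ⊗[A] B₂) := by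
  haveI := hff
  -- supports are open
  have ho₁ : IsOpen (Module.support A B₁) := aux_isOpen_support
  have ho₂ : IsOpen (Module.support A B₂) := aux_isOpen_support
  -- supports are nonempty
  have hne₁ : (Module.support A B₁).Nonempty := by
    rw [Set.nonempty_iff_ne_empty]
    intro h
    exact (not_subsingleton_iff_nontrivial.mpr ‹Nontrivial B₁›)
      (Module.support_eq_empty_iff.mp h)
  have hne₂ : (Module.support A B₂).Nonempty := by
    rw [Set.nonempty_iff_ne_empty]
    intro h
    exact (not_subsingleton_iff_nontrivial.mpr ‹Nontrivial B₂›)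
      (Module.support_eq_empty_iff.mp h)
  -- the supports cover Spec A
  have hcover : Set.univ ⊆ Module.support A B₁ ∪ Module.support A B₂ := by
    rw [← Module.support_of_exact (Function.Exact.inl_snd (M := B₁) (N := B₂))
      LinearMap.inl_injective (LinearMap.snd_surjective)]
    intro p _
    rw [Module.mem_support_iff]
    rw [← aux_nontrivial_tensor_iff p]
    infer_instance
  -- connectedness gives a common point
  obtain ⟨p, -, hp₁, hp₂⟩ := isPreconnected_univ (u := Module.support A B₁)
    (v := Module.support A B₂) ho₁ ho₂ hcover
    (by simpa using hne₁) (by simpa using hne₂)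
  -- localize at p
  set Rp := Localization.AtPrime p.asIdeal with hRp
  haveI : IsNoetherianRing Rp :=
    IsLocalization.isNoetherianRing p.asIdeal.primeCompl Rp ‹_›
  haveI h₁ : Nontrivial (Rp ⊗[A] B₁) :=
    (aux_nontrivial_tensor_iff p).mpr (Module.mem_support_iff.mp hp₁)
  haveI h₂ : Nontrivial (Rp ⊗[A] B₂) :=
    (aux_nontrivial_tensor_iff p).mpr (Module.mem_support_iff.mp hp₂)
  haveI : Module.Finite Rp (Rp ⊗[A] B₁) := Module.Finite.base_change A Rp B₁
  haveI : Module.Flat Rp (Rp ⊗[A] B₁) := Module.Flat.baseChange A Rp B₁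
  haveI : Module.FinitePresentation Rp (Rp ⊗[A] B₁) :=
    Module.finitePresentation_of_finite Rp _
  haveI : Module.Free Rp (Rp ⊗[A] B₁) := Module.free_of_flat_of_isLocalRing
  haveI : Module.FaithfullyFlat Rp (Rp ⊗[A] B₁) := inferInstance
  haveI : Nontrivial ((Rp ⊗[A] B₁) ⊗[Rp] (Rp ⊗[A] B₂)) := inferInstance
  -- build a ring hom from B₁ ⊗[A] B₂ to the nontrivial ring
  let f₁ : B₁ →ₐ[A] (Rp ⊗[A] B₁) ⊗[Rp] (Rp ⊗[A] B₂) :=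
    (Algebra.TensorProduct.includeLeft).comp Algebra.TensorProduct.includeRight
  let f₂ : B₂ →ₐ[A] (Rp ⊗[A] B₁) ⊗[Rp] (Rp ⊗[A] B₂) :=
    ((Algebra.TensorProduct.includeRight).restrictScalars A).comp
      Algebra.TensorProduct.includeRight
  let φ := Algebra.TensorProduct.lift f₁ f₂ (fun x y => mul_comm (f₁ x) (f₂ y))
  exact φ.toRingHom.domain_nontrivial
end
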